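/- Let r, N ≥ 1, let γ : [0,1] → ℂ be a continuously differentiable curve, and let W : ℂ → M_r(ℂ) be continuous on the image of γ. Suppose for each j = 0,…,N−1 there exist: a monic r×r matrix polynomial P_j^L of degree j with ∫_γ P_j^L(z) W(z) z^ℓ dz = 0_r for ℓ = 0,…,j−1, and an r×r matrix polynomial Q_j^R of degree ≤ j with ∫_γ z^ℓ W(z) Q_j^R(z) dz = δ_{ℓ,j}·I_r for ℓ = 0,…,j. Then the function R(w,z) := ∑_{j=0}^{N−1} Q_j^R(w)·P_j^L(z) is a left reproducing kernel of order N for W on γ, i.e. it is an r×r matrix polynomial of degree ≤ N−1 in each variable and ∫_γ P(w) W(w) R(w,z) dw = P(z) for every r×r matrix polynomial P of degree ≤ N−1 and every z ∈ ℂ. -/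

import Mathlib

open MeasureTheory Set

/-- An `m × n` matrix polynomial of degree at most `d`:
`P z = ∑_{ℓ=0}^{d} z ^ ℓ • C ℓ` for some constant matrices `C ℓ`. -/
def IsMatPoly (m n d : ℕ) (P : ℂ → Matrix (Fin m) (Fin n) ℂ) : Prop :=
  ∃ C : ℕ → Matrix (Fin m) (Fin n) ℂ,
    ∀ z : ℂ, P z = ∑ ℓ ∈ Finset.range (d + 1), z ^ ℓ • C ℓ

/-- A monic `r × r` matrix polynomial of degree `d`: the coefficient of `z ^ d` is `I_r`. -/
def IsMonicMatPoly (r d : ℕ) (P : ℂ → Matrix (Fin r) (Fin r) ℂ) : Prop :=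
  ∃ C : ℕ → Matrix (Fin r) (Fin r) ℂ, C d = 1 ∧
    ∀ z : ℂ, P z = ∑ ℓ ∈ Finset.range (d + 1), z ^ ℓ • C ℓ

/-- Entrywise contour integral of a matrix-valued function along `γ : [0,1] → ℂ`. -/
noncomputable def contourIntegralM {m n : ℕ} (γ : ℝ → ℂ) (F : ℂ → Matrix (Fin m) (Fin n) ℂ) :
    Matrix (Fin m) (Fin n) ℂ :=
  Matrix.of fun i j => ∫ t in (0:ℝ)..1, deriv γ t * F (γ t) i j

/-- `R` is a left reproducing kernel of order `N` for the weight `W` on the curve `γ`. -/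
def IsLeftReproducingKernel (r N : ℕ) (γ : ℝ → ℂ) (W : ℂ → Matrix (Fin r) (Fin r) ℂ)
    (R : ℂ → ℂ → Matrix (Fin r) (Fin r) ℂ) : Prop :=
  (∀ z : ℂ, IsMatPoly r r (N - 1) fun w => R w z) ∧
  (∀ w : ℂ, IsMatPoly r r (N - 1) fun z => R w z) ∧
  ∀ P : ℂ → Matrix (Fin r) (Fin r) ℂ, IsMatPoly r r (N - 1) P →
    ∀ z : ℂ, contourIntegralM γ (fun w => P w * W w * R w z) = P z


def IntOK {m n : ℕ} (γ : ℝ → ℂ) (F : ℂ → Matrix (Fin m) (Fin n) ℂ) : Prop :=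
  ∀ i j, IntervalIntegrable (fun t => deriv γ t * F (γ t) i j) volume 0 1

lemma key_integrable (γ : ℝ → ℂ) (hγ : ContDiffOn ℝ 1 γ (Set.Icc 0 1))
    (g : ℂ → ℂ) (hg : ContinuousOn g (γ '' Set.Icc 0 1)) :
    IntervalIntegrable (fun t => deriv γ t * g (γ t)) volume 0 1 := by
  have hd : ContinuousOn (derivWithin γ (Set.Icc 0 1)) (Set.Icc 0 1) :=
    hγ.continuousOn_derivWithin (uniqueDiffOn_Icc one_pos) le_rfl
  have hγc : ContinuousOn γ (Set.Icc 0 1) := hγ.continuousOn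
  have hF : ContinuousOn (fun t => derivWithin γ (Set.Icc 0 1) t * g (γ t)) (Set.Icc 0 1) :=
    hd.mul (hg.comp hγc (Set.mapsTo_image γ _))
  have hFi : IntervalIntegrable (fun t => derivWithin γ (Set.Icc 0 1) t * g (γ t)) volume 0 1 := by
    exact (hF.mono (Set.uIcc_of_le (by norm_num : (0:ℝ) ≤ 1)).subset).intervalIntegrable
  rw [intervalIntegrable_iff_integrableOn_Ioo_of_le (by norm_num : (0:ℝ) ≤ 1)] at hFi ⊢
  refine hFi.congr_fun (fun t ht => ?_) measurableSet_Ioo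
  simp only [derivWithin_of_mem_nhds (Icc_mem_nhds ht.1 ht.2)]

lemma matrix_entry_continuous {m n : ℕ} (i : Fin m) (j : Fin n) :
    Continuous fun M : Matrix (Fin m) (Fin n) ℂ => M i j := by
  exact continuous_apply_apply i j

lemma intOK_of_contOn {m n : ℕ} (γ : ℝ → ℂ) (hγ : ContDiffOn ℝ 1 γ (Set.Icc 0 1))
    (F : ℂ → Matrix (Fin m) (Fin n) ℂ)
    (hF : ∀ i j, ContinuousOn (fun z => F z i j) (γ '' Set.Icc 0 1)) : IntOK γ F :=
  fun i j => key_integrable γ hγ (fun z => F z i j) (hF i j)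

lemma contourIntegralM_sum {m n : ℕ} {ι : Type*} (γ : ℝ → ℂ) (s : Finset ι)
    (A : ι → ℂ → Matrix (Fin m) (Fin n) ℂ) (h : ∀ k ∈ s, IntOK γ (A k)) :
    contourIntegralM γ (fun w => ∑ k ∈ s, A k w) = ∑ k ∈ s, contourIntegralM γ (A k) := by
  ext i j
  simp only [contourIntegralM, Matrix.of_apply, Matrix.sum_apply, Finset.mul_sum]
  rw [intervalIntegral.integral_finset_sum (fun k hk => h k hk i j)]

lemma contourIntegralM_const_mul {m n p : ℕ} (γ : ℝ → ℂ) (D : Matrix (Fin m) (Fin n) ℂ)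
    (F : ℂ → Matrix (Fin n) (Fin p) ℂ) (h : IntOK γ F) :
    contourIntegralM γ (fun w => D * F w) = D * contourIntegralM γ F := by
  ext i j
  simp only [contourIntegralM, Matrix.of_apply, Matrix.mul_apply, Finset.mul_sum]
  rw [intervalIntegral.integral_finset_sum (fun k _ => ?_)]
  · refine Finset.sum_congr rfl fun k _ => ?_
    rw [← intervalIntegral.integral_const_mul]
    exact intervalIntegral.integral_congr fun t _ => by ring
  · have : (fun t => deriv γ t * (D i k * F (γ t) k j))
        = fun t => D i k * (deriv γ t * F (γ t) k j) := by funext t; ring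
    rw [this]
    exact (h k j).const_mul (D i k)

lemma contourIntegralM_mul_const {m n p : ℕ} (γ : ℝ → ℂ)
    (F : ℂ → Matrix (Fin m) (Fin n) ℂ) (E : Matrix (Fin n) (Fin p) ℂ) (h : IntOK γ F) :
    contourIntegralM γ (fun w => F w * E) = contourIntegralM γ F * E := by
  ext i j
  simp only [contourIntegralM, Matrix.of_apply, Matrix.mul_apply, Finset.mul_sum]
  rw [intervalIntegral.integral_finset_sum (fun k _ => ?_)]
  · refine Finset.sum_congr rfl fun k _ => ?_
    rw [← intervalIntegral.integral_mul_const]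
    exact intervalIntegral.integral_congr fun t _ => by ring
  · have : (fun t => deriv γ t * (F (γ t) i k * E k j))
        = fun t => (deriv γ t * F (γ t) i k) * E k j := by funext t; ring
    rw [this]
    exact (h i k).mul_const (E k j)

lemma contOn_entry_mul {m n p : ℕ} (s : Set ℂ) (A : ℂ → Matrix (Fin m) (Fin n) ℂ)
    (B : ℂ → Matrix (Fin n) (Fin p) ℂ)
    (hA : ∀ i j, ContinuousOn (fun z => A z i j) s)
    (hB : ∀ i j, ContinuousOn (fun z => B z i j) s) :
    ∀ i j, ContinuousOn (fun z => (A z * B z) i j) s := by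
  intro i j
  have h : (fun z => (A z * B z) i j) = fun z => ∑ k, A z i k * B z k j := by
    funext z; simp [Matrix.mul_apply]
  rw [h]
  exact continuousOn_finset_sum _ fun k _ => (hA i k).mul (hB k j)

lemma matPoly_entry_continuousOn {m n d : ℕ} {P : ℂ → Matrix (Fin m) (Fin n) ℂ}
    (h : IsMatPoly m n d P) (s : Set ℂ) : ∀ i j, ContinuousOn (fun z => P z i j) s := by
  obtain ⟨C, hC⟩ := h
  intro i j
  have h2 : (fun z => P z i j) = fun z => ∑ ℓ ∈ Finset.range (d+1), z ^ ℓ * C ℓ i j := by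
    funext z; rw [hC z]; simp [Matrix.sum_apply]
  rw [h2]
  exact (continuous_finset_sum _ fun ℓ _ => (continuous_pow ℓ).mul continuous_const).continuousOn

lemma IntOK.sum {m n : ℕ} {ι : Type*} {γ : ℝ → ℂ} (s : Finset ι)
    (A : ι → ℂ → Matrix (Fin m) (Fin n) ℂ) (h : ∀ k ∈ s, IntOK γ (A k)) :
    IntOK γ (fun w => ∑ k ∈ s, A k w) := by
  intro i j
  have h2 : (fun t => deriv γ t * (∑ k ∈ s, A k (γ t)) i j)
      = ∑ k ∈ s, (fun t => deriv γ t * A k (γ t) i j) := by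
    funext t; simp [Matrix.sum_apply, Finset.mul_sum, Finset.sum_apply]
  rw [h2]
  exact IntervalIntegrable.sum s fun k hk => h k hk i j


/-- `∑_{j=0}^{N-1} Q_j^R(w) P_j^L(z)` is a left reproducing kernel of
order `N` for `W` on `γ`. -/
theorem stmt4 (r N : ℕ) (hr : 1 ≤ r) (hN : 1 ≤ N)
    (γ : ℝ → ℂ) (hγ : ContDiffOn ℝ 1 γ (Set.Icc 0 1))
    (W : ℂ → Matrix (Fin r) (Fin r) ℂ) (hW : ContinuousOn W (γ '' Set.Icc 0 1))
    (P Q : ℕ → ℂ → Matrix (Fin r) (Fin r) ℂ)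
    (hP : ∀ j < N, IsMonicMatPoly r j (P j))
    (hPorth : ∀ j < N, ∀ ℓ < j, contourIntegralM γ (fun z => z ^ ℓ • (P j z * W z)) = 0)
    (hQ : ∀ j < N, IsMatPoly r r j (Q j))
    (hQorth : ∀ j < N, ∀ ℓ ≤ j, contourIntegralM γ (fun z => z ^ ℓ • (W z * Q j z)) =
      if ℓ = j then 1 else 0) :
    IsLeftReproducingKernel r N γ W
      (fun w z => ∑ j ∈ Finset.range N, Q j w * P j z) := by
  have hN1 : N - 1 + 1 = N := Nat.sub_add_cancel hN
  set S := γ '' Set.Icc 0 1 with hS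
  -- total coefficient functions
  have hPA : ∀ j, ∃ C : ℕ → Matrix (Fin r) (Fin r) ℂ,
      (j < N → C j = 1) ∧ (j < N → ∀ z, P j z = ∑ ℓ ∈ Finset.range (j+1), z ^ ℓ • C ℓ) := by
    intro j
    by_cases hj : j < N
    · obtain ⟨C, h1, h2⟩ := hP j hj; exact ⟨C, fun _ => h1, fun _ => h2⟩
    · exact ⟨0, fun h => absurd h hj, fun h => absurd h hj⟩
  choose A hA1 hA2 using hPA
  have hQB : ∀ j, ∃ C : ℕ → Matrix (Fin r) (Fin r) ℂ,
      (j < N → ∀ z, Q j z = ∑ ℓ ∈ Finset.range (j+1), z ^ ℓ • C ℓ) := by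
    intro j
    by_cases hj : j < N
    · obtain ⟨C, h2⟩ := hQ j hj; exact ⟨C, fun _ => h2⟩
    · exact ⟨0, fun h => absurd h hj⟩
  choose B hB using hQB
  -- entry continuity
  have hWe : ∀ i j, ContinuousOn (fun z => W z i j) S :=
    fun i j => (continuous_apply_apply i j).comp_continuousOn hW
  have hPe : ∀ j, j < N → ∀ i k, ContinuousOn (fun z => P j z i k) S :=
    fun j hj => matPoly_entry_continuousOn ⟨A j, hA2 j hj⟩ S
  have hQe : ∀ j, j < N → ∀ i k, ContinuousOn (fun z => Q j z i k) S :=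
    fun j hj => matPoly_entry_continuousOn ⟨B j, hB j hj⟩ S
  -- entry continuity of the composite integrands
  have eWQ : ∀ j, j < N → ∀ ℓ : ℕ, ∀ i k,
      ContinuousOn (fun z => (z ^ ℓ • (W z * Q j z)) i k) S := by
    intro j hj ℓ i k
    have h1 := contOn_entry_mul S W (Q j) hWe (hQe j hj) i k
    have h2 : (fun z => (z ^ ℓ • (W z * Q j z)) i k)
        = fun z => z ^ ℓ * (W z * Q j z) i k := by
      funext z; simp [Matrix.smul_apply, smul_eq_mul]
    rw [h2]
    exact (continuous_pow ℓ).continuousOn.mul h1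
  have ePW : ∀ k, k < N → ∀ m : ℕ, ∀ i k',
      ContinuousOn (fun z => (z ^ m • (P k z * W z)) i k') S := by
    intro k hk m i k'
    have h1 := contOn_entry_mul S (P k) W (hPe k hk) hWe i k'
    have h2 : (fun z => (z ^ m • (P k z * W z)) i k')
        = fun z => z ^ m * (P k z * W z) i k' := by
      funext z; simp [Matrix.smul_apply, smul_eq_mul]
    rw [h2]
    exact (continuous_pow m).continuousOn.mul h1
  have okWQ : ∀ j, j < N → ∀ ℓ : ℕ, IntOK γ (fun z => z ^ ℓ • (W z * Q j z)) :=
    fun j hj ℓ => intOK_of_contOn γ hγ _ (eWQ j hj ℓ)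
  have okPW : ∀ k, k < N → ∀ m : ℕ, IntOK γ (fun z => z ^ m • (P k z * W z)) :=
    fun k hk m => intOK_of_contOn γ hγ _ (ePW k hk m)
  have ePWQ : ∀ k, k < N → ∀ j, j < N → ∀ i k',
      ContinuousOn (fun w => (P k w * W w * Q j w) i k') S :=
    fun k hk j hj => contOn_entry_mul S _ _ (contOn_entry_mul S _ _ (hPe k hk) hWe) (hQe j hj)
  have okPWQ : ∀ k, k < N → ∀ j, j < N → IntOK γ (fun w => P k w * W w * Q j w) :=
    fun k hk j hj => intOK_of_contOn γ hγ _ (ePWQ k hk j hj)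
  -- the key orthogonality relation
  have key2 : ∀ k, k < N → ∀ j, j < N →
      contourIntegralM γ (fun w => P k w * W w * Q j w) = if k = j then 1 else 0 := by
    intro k hk j hj
    rcases le_or_gt k j with hkj | hjk
    · have hexp : (fun w => P k w * W w * Q j w)
          = fun w => ∑ ℓ ∈ Finset.range (k+1), A k ℓ * (w ^ ℓ • (W w * Q j w)) := by
        funext w
        rw [hA2 k hk w, Finset.sum_mul, Finset.sum_mul]
        exact Finset.sum_congr rfl fun ℓ _ => by
          simp [smul_mul_assoc, mul_smul_comm, mul_assoc]
      rw [hexp, contourIntegralM_sum γ _ _ (fun ℓ _ =>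
        intOK_of_contOn γ hγ _ (contOn_entry_mul S (fun _ => A k ℓ) _
          (fun i k' => continuousOn_const) (eWQ j hj ℓ)))]
      have hterm : ∀ ℓ ∈ Finset.range (k+1),
          contourIntegralM γ (fun w => A k ℓ * (w ^ ℓ • (W w * Q j w)))
            = if ℓ = j then A k ℓ else 0 := by
        intro ℓ hℓ
        rw [contourIntegralM_const_mul γ _ _ (okWQ j hj ℓ),
          hQorth j hj ℓ (le_trans (Nat.lt_succ_iff.mp (Finset.mem_range.mp hℓ)) hkj)]
        split <;> simp
      rw [Finset.sum_congr rfl hterm, Finset.sum_ite_eq' (Finset.range (k+1)) j (A k)]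
      rcases eq_or_lt_of_le hkj with h | h
      · subst h
        rw [if_pos (Finset.self_mem_range_succ k), if_pos rfl, hA1 k hk]
      · rw [if_neg (by simp [Finset.mem_range]; omega), if_neg (by omega)]
    · have hexp : (fun w => P k w * W w * Q j w)
          = fun w => ∑ m ∈ Finset.range (j+1), (w ^ m • (P k w * W w)) * B j m := by
        funext w
        rw [hB j hj w, Finset.mul_sum]
        exact Finset.sum_congr rfl fun m _ => by
          simp [smul_mul_assoc, mul_smul_comm, mul_assoc]
      rw [hexp, contourIntegralM_sum γ _ _ (fun m _ =>
        intOK_of_contOn γ hγ _ (contOn_entry_mul S _ (fun _ => B j m)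
          (ePW k hk m) (fun i k' => continuousOn_const)))]
      have hterm : ∀ m ∈ Finset.range (j+1),
          contourIntegralM γ (fun w => (w ^ m • (P k w * W w)) * B j m) = 0 := by
        intro m hm
        rw [contourIntegralM_mul_const γ _ _ (okPW k hk m),
          hPorth k hk m (lt_of_le_of_lt (Nat.lt_succ_iff.mp (Finset.mem_range.mp hm)) hjk),
          Matrix.zero_mul]
      rw [Finset.sum_congr rfl hterm, Finset.sum_const, smul_zero, if_neg (by omega)]
  -- expansion in the monic basis
  have basisAux : ∀ d, d < N → ∀ C : ℕ → Matrix (Fin r) (Fin r) ℂ,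
      ∃ D : ℕ → Matrix (Fin r) (Fin r) ℂ,
        ∀ z, ∑ ℓ ∈ Finset.range (d+1), z ^ ℓ • C ℓ = ∑ k ∈ Finset.range (d+1), D k * P k z := by
    intro d
    induction d with
    | zero =>
      intro h0 C
      refine ⟨fun _ => C 0, fun z => ?_⟩
      rw [Finset.sum_range_one, Finset.sum_range_one, hA2 0 h0 z, Finset.sum_range_one,
        hA1 0 h0]
      simp
    | succ d ih =>
      intro hd C
      have hd' : d < N := Nat.lt_of_succ_lt hd
      obtain ⟨D, hD⟩ := ih hd' (fun ℓ => C ℓ - C (d+1) * A (d+1) ℓ)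
      refine ⟨fun k => if k = d+1 then C (d+1) else D k, fun z => ?_⟩
      beta_reduce
      conv_lhs => rw [Finset.sum_range_succ]
      conv_rhs => rw [Finset.sum_range_succ]
      have h1 : ∑ k ∈ Finset.range (d+1),
          (if k = d+1 then C (d+1) else D k) * P k z = ∑ k ∈ Finset.range (d+1), D k * P k z :=
        Finset.sum_congr rfl fun k hk => by
          rw [if_neg (by have := Finset.mem_range.mp hk; omega)]
      rw [h1]
      rw [if_pos rfl]
      rw [← hD z]
      rw [hA2 (d+1) hd z]
      rw [Finset.mul_sum]
      rw [Finset.sum_range_succ (f := fun ℓ => C (d+1) * (z ^ ℓ • A (d+1) ℓ))]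
      rw [hA1 (d+1) hd]
      rw [← add_assoc, ← Finset.sum_add_distrib]
      have h2 : ∀ ℓ, z ^ ℓ • (C ℓ - C (d+1) * A (d+1) ℓ) + C (d+1) * (z ^ ℓ • A (d+1) ℓ)
          = z ^ ℓ • C ℓ := by
        intro ℓ; rw [smul_sub, mul_smul_comm, sub_add_cancel]
      rw [Finset.sum_congr rfl fun ℓ _ => h2 ℓ]
      congr 1
      rw [mul_smul_comm, mul_one]
  -- truncation of sums with `ite` coefficients
  have trunc : ∀ (j : ℕ), j < N → ∀ (M : ℕ → Matrix (Fin r) (Fin r) ℂ) (z : ℂ),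
      ∑ ℓ ∈ Finset.range N, z ^ ℓ • (if ℓ ≤ j then M ℓ else 0)
        = ∑ ℓ ∈ Finset.range (j+1), z ^ ℓ • M ℓ := by
    intro j hj M z
    have hsub := Finset.sum_subset (f := fun ℓ => z ^ ℓ • (if ℓ ≤ j then M ℓ else 0))
      (Finset.range_subset_range.mpr hj) (fun ℓ _ hℓ' => by
        show z ^ ℓ • (if ℓ ≤ j then M ℓ else 0) = 0
        rw [if_neg (by simp only [Finset.mem_range] at hℓ'; omega), smul_zero])
    rw [← hsub]
    exact Finset.sum_congr rfl fun ℓ hℓ => by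
      show z ^ ℓ • (if ℓ ≤ j then M ℓ else 0) = z ^ ℓ • M ℓ
      rw [if_pos (Nat.lt_succ_iff.mp (Finset.mem_range.mp hℓ))]
  refine ⟨?_, ?_, ?_⟩
  · -- polynomial in `w`
    intro z
    refine ⟨fun m => ∑ j ∈ Finset.range N, (if m ≤ j then B j m else 0) * P j z, fun w => ?_⟩
    rw [hN1]
    symm
    have h3 : ∀ m : ℕ, w ^ m • ∑ j ∈ Finset.range N, (if m ≤ j then B j m else 0) * P j z
        = ∑ j ∈ Finset.range N, (w ^ m • (if m ≤ j then B j m else 0)) * P j z := by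
      intro m
      rw [Finset.smul_sum]
      exact Finset.sum_congr rfl fun j _ => (smul_mul_assoc _ _ _).symm
    rw [Finset.sum_congr rfl fun m _ => h3 m, Finset.sum_comm]
    refine Finset.sum_congr rfl fun j hj => ?_
    rw [← Finset.sum_mul]
    congr 1
    rw [trunc j (Finset.mem_range.mp hj) (B j) w]
    exact (hB j (Finset.mem_range.mp hj) w).symm
  · -- polynomial in `z`
    intro w
    refine ⟨fun ℓ => ∑ j ∈ Finset.range N, Q j w * (if ℓ ≤ j then A j ℓ else 0), fun z => ?_⟩
    rw [hN1]
    symm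
    have h3 : ∀ ℓ : ℕ, z ^ ℓ • ∑ j ∈ Finset.range N, Q j w * (if ℓ ≤ j then A j ℓ else 0)
        = ∑ j ∈ Finset.range N, Q j w * (z ^ ℓ • (if ℓ ≤ j then A j ℓ else 0)) := by
      intro ℓ
      rw [Finset.smul_sum]
      exact Finset.sum_congr rfl fun j _ => (mul_smul_comm _ _ _).symm
    rw [Finset.sum_congr rfl fun ℓ _ => h3 ℓ, Finset.sum_comm]
    refine Finset.sum_congr rfl fun j hj => ?_
    rw [← Finset.mul_sum, trunc j (Finset.mem_range.mp hj) (A j) z,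
      ← hA2 j (Finset.mem_range.mp hj) z]
  · -- the reproducing property
    intro P' hP' z
    obtain ⟨C, hC⟩ := hP'
    obtain ⟨D, hD⟩ := basisAux (N-1) (by omega) C
    have hPD : ∀ w, P' w = ∑ k ∈ Finset.range N, D k * P k w := by
      intro w; rw [hC w, hD w, hN1]
    have hexp : (fun w => P' w * W w * (∑ j ∈ Finset.range N, Q j w * P j z))
        = fun w => ∑ k ∈ Finset.range N, ∑ j ∈ Finset.range N,
            D k * ((P k w * W w * Q j w) * P j z) := by
      funext w
      rw [hPD w, Finset.sum_mul, Finset.sum_mul]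
      refine Finset.sum_congr rfl fun k hk => ?_
      rw [Finset.mul_sum]
      exact Finset.sum_congr rfl fun j hj => by simp only [mul_assoc]
    have okInner : ∀ k, k < N → ∀ j, j < N →
        IntOK γ (fun w => D k * ((P k w * W w * Q j w) * P j z)) := by
      intro k hk j hj
      apply intOK_of_contOn γ hγ
      exact contOn_entry_mul S (fun _ => D k) _ (fun i k' => continuousOn_const)
        (contOn_entry_mul S _ (fun _ => P j z) (ePWQ k hk j hj) (fun i k' => continuousOn_const))
    show contourIntegralM γ (fun w => P' w * W w * (∑ j ∈ Finset.range N, Q j w * P j z)) = P' z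
    rw [hexp]
    rw [contourIntegralM_sum γ _ _ (fun k hk => IntOK.sum _ _
      (fun j hj => okInner k (Finset.mem_range.mp hk) j (Finset.mem_range.mp hj)))]
    have hkterm : ∀ k ∈ Finset.range N,
        contourIntegralM γ
            (fun w => ∑ j ∈ Finset.range N, D k * ((P k w * W w * Q j w) * P j z))
          = D k * P k z := by
      intro k hk
      have hkN := Finset.mem_range.mp hk
      rw [contourIntegralM_sum γ _ _ (fun j hj => okInner k hkN j (Finset.mem_range.mp hj))]
      have hjterm : ∀ j ∈ Finset.range N,
          contourIntegralM γ (fun w => D k * ((P k w * W w * Q j w) * P j z))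
            = if k = j then D k * P j z else 0 := by
        intro j hj
        have hjN := Finset.mem_range.mp hj
        rw [contourIntegralM_const_mul γ _ _ (intOK_of_contOn γ hγ _
            (contOn_entry_mul S _ (fun _ => P j z) (ePWQ k hkN j hjN)
              (fun i k' => continuousOn_const))),
          contourIntegralM_mul_const γ _ _ (okPWQ k hkN j hjN), key2 k hkN j hjN]
        by_cases h : k = j
        · simp [h]
        · simp [h]
      rw [Finset.sum_congr rfl hjterm,
        Finset.sum_ite_eq (Finset.range N) k (fun j => D k * P j z), if_pos hk]
    rw [Finset.sum_congr rfl hkterm, ← hPD z]
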